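/- arXiv:1711.08837 — 13 statements merged into one kernel-verified Lean document; each statement's English description precedes it below -/
import Mathlib

section
/- If (M, ≤) is a well-quasi-order, then the set M* of finite sequences of elements of M, ordered by the subsequence relation (where (a_1,...,a_m) ≤* (b_1,...,b_n) iff there exist indices 1 ≤ i_1 < ... < i_m ≤ n with a_j ≤ b_{i_j} for all j), is a well-quasi-order. -/
/-- A relation is a well-quasi-order if every infinite sequence contains
indices `i < j` with `r (f i) (f j)`. -/
def IsWQO {α : Type*} (r : α → α → Prop) : Prop :=
  ∀ f : ℕ → α, ∃ i j : ℕ, i < j ∧ r (f i) (f j)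

/-- Higman's Lemma: if `(M, ≤)` is a well-quasi-order, then the finite sequences
over `M` ordered by the subsequence relation form a well-quasi-order. -/
theorem higman_lemma {α : Type*} (r : α → α → Prop)
    (hrefl : Reflexive r) (htrans : Transitive r) (hwqo : IsWQO r) :
    IsWQO (List.SublistForall₂ r) := by
  haveI : IsRefl α r := ⟨hrefl⟩
  haveI : IsTrans α r := ⟨htrans⟩
  have hs : (Set.univ : Set α).PartiallyWellOrderedOn r := by
    intro f
    obtain ⟨i, j, hij, hr⟩ := hwqo (fun n => (f n).1)
    exact ⟨i, j, hij, hr⟩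
  haveI : IsPreorder α r := {}
  have := Set.PartiallyWellOrderedOn.partiallyWellOrderedOn_sublistForall₂ r hs
  intro f
  obtain ⟨i, j, hij, hr⟩ := this (fun n => ⟨f n, fun x _ => Set.mem_univ x⟩)
  exact ⟨i, j, hij, hr⟩
end

section
/- Let G be a 3-partite graph with parts V_1, V_2, V_3 that contains no rainbow triangle and no rainbow independent set of size 3 (with one vertex in each part), and suppose the bipartite graphs G[V_1 ∪ V_2] and G[V_1 ∪ V_3] are both 2P_2-free. Then the vertices of V_1 admit a linear ordering x_1, ..., x_ℓ such that for i < j, N(x_i) ∩ V_2 ⊇ N(x_j) ∩ V_2 and N(x_i) ∩ V_3 ⊆ N(x_j) ∩ V_3. -/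
/-- For a curious 3-partite graph (no rainbow triangle, no rainbow independent
triple) in which `G[V₁ ∪ V₂]` and `G[V₁ ∪ V₃]` are `2P₂`-free, the vertices of
`V₁` admit a linear ordering which is decreasing towards `V₂` and increasing
towards `V₃`. -/
theorem curious_type01_linear_order {V : Type*} [Fintype V]
    (G : SimpleGraph V) (V₁ V₂ V₃ : Set V)
    (hpart : V₁ ∪ V₂ ∪ V₃ = Set.univ)
    (h12 : Disjoint V₁ V₂) (h13 : Disjoint V₁ V₃) (h23 : Disjoint V₂ V₃)
    (hind₁ : ∀ u ∈ V₁, ∀ w ∈ V₁, ¬ G.Adj u w)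
    (hind₂ : ∀ u ∈ V₂, ∀ w ∈ V₂, ¬ G.Adj u w)
    (hind₃ : ∀ u ∈ V₃, ∀ w ∈ V₃, ¬ G.Adj u w)
    (hnoK3 : ¬ ∃ x ∈ V₁, ∃ y ∈ V₂, ∃ z ∈ V₃, G.Adj x y ∧ G.Adj y z ∧ G.Adj x z)
    (hno3P1 : ¬ ∃ x ∈ V₁, ∃ y ∈ V₂, ∃ z ∈ V₃,
        ¬ G.Adj x y ∧ ¬ G.Adj y z ∧ ¬ G.Adj x z)
    (h2P2₁₂ : ¬ ∃ a₁ a₂ b₁ b₂ : V, a₁ ∈ V₁ ∧ a₂ ∈ V₁ ∧ b₁ ∈ V₂ ∧ b₂ ∈ V₂ ∧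
        G.Adj a₁ b₁ ∧ G.Adj a₂ b₂ ∧ ¬ G.Adj a₁ b₂ ∧ ¬ G.Adj a₂ b₁)
    (h2P2₁₃ : ¬ ∃ a₁ a₂ b₁ b₂ : V, a₁ ∈ V₁ ∧ a₂ ∈ V₁ ∧ b₁ ∈ V₃ ∧ b₂ ∈ V₃ ∧
        G.Adj a₁ b₁ ∧ G.Adj a₂ b₂ ∧ ¬ G.Adj a₁ b₂ ∧ ¬ G.Adj a₂ b₁) :
    ∃ l : List V, l.Nodup ∧ (∀ x : V, x ∈ l ↔ x ∈ V₁) ∧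
      ∀ (i j : ℕ) (hi : i < l.length) (hj : j < l.length), i < j →
        (G.neighborSet (l.get ⟨j, hj⟩) ∩ V₂ ⊆ G.neighborSet (l.get ⟨i, hi⟩) ∩ V₂) ∧
        (G.neighborSet (l.get ⟨i, hi⟩) ∩ V₃ ⊆ G.neighborSet (l.get ⟨j, hj⟩) ∩ V₃) := by
  classical
  -- The basic preorder on V₁
  set P : V → V → Prop := fun x y =>
    (G.neighborSet y ∩ V₂ ⊆ G.neighborSet x ∩ V₂) ∧
    (G.neighborSet x ∩ V₃ ⊆ G.neighborSet y ∩ V₃) with hP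
  -- comparability of V₂-neighborhoods
  have hcmp2 : ∀ x ∈ V₁, ∀ y ∈ V₁,
      (G.neighborSet x ∩ V₂ ⊆ G.neighborSet y ∩ V₂) ∨
      (G.neighborSet y ∩ V₂ ⊆ G.neighborSet x ∩ V₂) := by
    intro x hx y hy
    by_contra h
    push_neg at h
    obtain ⟨h1, h2⟩ := h
    rw [Set.not_subset] at h1 h2
    obtain ⟨b₁, hb₁, hb₁'⟩ := h1
    obtain ⟨b₂, hb₂, hb₂'⟩ := h2
    obtain ⟨hxb₁, hb₁2⟩ := hb₁
    obtain ⟨hyb₂, hb₂2⟩ := hb₂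
    exact h2P2₁₂ ⟨x, y, b₁, b₂, hx, hy, hb₁2, hb₂2, hxb₁, hyb₂,
      fun h' => hb₂' ⟨h', hb₂2⟩, fun h' => hb₁' ⟨h', hb₁2⟩⟩
  have hcmp3 : ∀ x ∈ V₁, ∀ y ∈ V₁,
      (G.neighborSet x ∩ V₃ ⊆ G.neighborSet y ∩ V₃) ∨
      (G.neighborSet y ∩ V₃ ⊆ G.neighborSet x ∩ V₃) := by
    intro x hx y hy
    by_contra h
    push_neg at h
    obtain ⟨h1, h2⟩ := h
    rw [Set.not_subset] at h1 h2
    obtain ⟨b₁, hb₁, hb₁'⟩ := h1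
    obtain ⟨b₂, hb₂, hb₂'⟩ := h2
    obtain ⟨hxb₁, hb₁3⟩ := hb₁
    obtain ⟨hyb₂, hb₂3⟩ := hb₂
    exact h2P2₁₃ ⟨x, y, b₁, b₂, hx, hy, hb₁3, hb₂3, hxb₁, hyb₂,
      fun h' => hb₂' ⟨h', hb₂3⟩, fun h' => hb₁' ⟨h', hb₁3⟩⟩
  -- key lemma
  have key : ∀ x ∈ V₁, ∀ y ∈ V₁,
      (G.neighborSet y ∩ V₂ ⊆ G.neighborSet x ∩ V₂) → P x y ∨ P y x := by
    intro x hx y hy h2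
    rcases hcmp3 x hx y hy with h3 | h3
    · exact Or.inl ⟨h2, h3⟩
    · -- N₃(y) ⊆ N₃(x); show either N₃(x) ⊆ N₃(y) (done) or N₂(x) ⊆ N₂(y)
      by_cases h3' : G.neighborSet x ∩ V₃ ⊆ G.neighborSet y ∩ V₃
      · exact Or.inl ⟨h2, h3'⟩
      · right
        refine ⟨?_, h3⟩
        -- pick c ∈ N₃(x) \ N₃(y)
        rw [Set.not_subset] at h3'
        obtain ⟨c, ⟨hxc, hc3⟩, hc'⟩ := h3'
        have hyc : ¬ G.Adj y c := fun h => hc' ⟨h, hc3⟩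
        intro b hb
        obtain ⟨hxb, hb2⟩ := hb
        by_contra hb'
        have hyb : ¬ G.Adj y b := fun h => hb' ⟨h, hb2⟩
        have hbc : G.Adj b c := by
          by_contra hbc
          exact hno3P1 ⟨y, hy, b, hb2, c, hc3, hyb, hbc, hyc⟩
        exact hnoK3 ⟨x, hx, b, hb2, c, hc3, hxb, hbc, hxc⟩
  have hPtotal : ∀ x ∈ V₁, ∀ y ∈ V₁, P x y ∨ P y x := by
    intro x hx y hy
    rcases hcmp2 x hx y hy with h2 | h2
    · exact (key y hy x hx h2).symm
    · exact key x hx y hy h2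
  have hPtrans : ∀ x y z, P x y → P y z → P x z := by
    intro x y z ⟨a1, a2⟩ ⟨b1, b2⟩
    exact ⟨b1.trans a1, a2.trans b2⟩
  -- extend to a total relation on V: vertices outside V₁ go to the top
  set R : V → V → Prop := fun x y =>
    (x ∈ V₁ ∧ y ∈ V₁ ∧ P x y) ∨ (x ∈ V₁ ∧ y ∉ V₁) ∨ (x ∉ V₁ ∧ y ∉ V₁) with hR
  set le : V → V → Bool := fun x y => decide (R x y) with hle
  have hle_iff : ∀ x y, le x y = true ↔ R x y := by
    intro x y; simp [hle]
  have htrans : ∀ a b c : V, le a b → le b c → le a c := by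
    intro a b c hab hbc
    rw [hle_iff] at *
    rcases hab with ⟨ha, hb, hP1⟩ | ⟨ha, hb⟩ | ⟨ha, hb⟩ <;>
      rcases hbc with ⟨hb', hc, hP2⟩ | ⟨hb', hc⟩ | ⟨hb', hc⟩ <;>
      first
        | exact Or.inl ⟨ha, hc, hPtrans _ _ _ hP1 hP2⟩
        | exact Or.inr (Or.inl ⟨ha, hc⟩)
        | exact Or.inr (Or.inr ⟨ha, hc⟩)
        | exact absurd hb' hb
        | exact absurd hb hb'
  have htotal : ∀ a b : V, le a b || le b a := by
    intro a b
    rw [Bool.or_eq_true, hle_iff, hle_iff]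
    by_cases ha : a ∈ V₁ <;> by_cases hb : b ∈ V₁
    · rcases hPtotal a ha b hb with h | h
      · exact Or.inl (Or.inl ⟨ha, hb, h⟩)
      · exact Or.inr (Or.inl ⟨hb, ha, h⟩)
    · exact Or.inl (Or.inr (Or.inl ⟨ha, hb⟩))
    · exact Or.inr (Or.inr (Or.inl ⟨hb, ha⟩))
    · exact Or.inl (Or.inr (Or.inr ⟨ha, hb⟩))
  -- the sorted list
  refine ⟨(V₁.toFinset.toList).mergeSort le, ?_, ?_, ?_⟩
  · exact ((List.mergeSort_perm _ _).symm).nodup V₁.toFinset.nodup_toList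
  · intro x
    rw [List.mem_mergeSort, Finset.mem_toList, Set.mem_toFinset]
  · intro i j hi hj hij
    have hsorted := List.pairwise_mergeSort (le := le) htrans htotal V₁.toFinset.toList
    rw [List.pairwise_iff_get] at hsorted
    have hrel := hsorted ⟨i, hi⟩ ⟨j, hj⟩ hij
    rw [hle_iff] at hrel
    have hmemi : (V₁.toFinset.toList.mergeSort le).get ⟨i, hi⟩ ∈ V₁ := by
      have := List.get_mem (V₁.toFinset.toList.mergeSort le) ⟨i, hi⟩
      rw [List.mem_mergeSort, Finset.mem_toList, Set.mem_toFinset] at this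
      exact this
    have hmemj : (V₁.toFinset.toList.mergeSort le).get ⟨j, hj⟩ ∈ V₁ := by
      have := List.get_mem (V₁.toFinset.toList.mergeSort le) ⟨j, hj⟩
      rw [List.mem_mergeSort, Finset.mem_toList, Set.mem_toFinset] at this
      exact this
    rcases hrel with ⟨_, _, hP1, hP2⟩ | ⟨_, h⟩ | ⟨h, _⟩
    · exact ⟨hP1, hP2⟩
    · exact absurd hmemj h
    · exact absurd hmemi h
end

section
/- Let G be a 3-partite graph with parts V_1, V_2, V_3 containing no rainbow K_3 and no rainbow 3P_1, and let x_1, x_2 ∈ V_1 and y_1, y_2 ∈ V_2 induce a 2P_2 with edges x_1y_1 and x_2y_2. Then every vertex z ∈ V_3 has exactly two neighbours among {x_1, x_2, y_1, y_2}, and these two neighbours either both lie in {x_1, x_2} or both lie in {y_1, y_2}. -/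
/-- In a curious 3-partite graph, given a `2P₂` induced between `V₁` and `V₂`,
every vertex of `V₃` has exactly two neighbours on the `2P₂`, and these
neighbours either both lie in `V₁` or both lie in `V₂`. -/
theorem curious_nbrs_in_2P2 {V : Type*} [Fintype V]
    (G : SimpleGraph V) (V₁ V₂ V₃ : Set V)
    (hpart : V₁ ∪ V₂ ∪ V₃ = Set.univ)
    (h12 : Disjoint V₁ V₂) (h13 : Disjoint V₁ V₃) (h23 : Disjoint V₂ V₃)
    (hind₁ : ∀ u ∈ V₁, ∀ w ∈ V₁, ¬ G.Adj u w)
    (hind₂ : ∀ u ∈ V₂, ∀ w ∈ V₂, ¬ G.Adj u w)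
    (hind₃ : ∀ u ∈ V₃, ∀ w ∈ V₃, ¬ G.Adj u w)
    (hnoK3 : ¬ ∃ x ∈ V₁, ∃ y ∈ V₂, ∃ z ∈ V₃, G.Adj x y ∧ G.Adj y z ∧ G.Adj x z)
    (hno3P1 : ¬ ∃ x ∈ V₁, ∃ y ∈ V₂, ∃ z ∈ V₃,
        ¬ G.Adj x y ∧ ¬ G.Adj y z ∧ ¬ G.Adj x z)
    (x₁ x₂ y₁ y₂ : V) (hx₁ : x₁ ∈ V₁) (hx₂ : x₂ ∈ V₁) (hy₁ : y₁ ∈ V₂) (hy₂ : y₂ ∈ V₂)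
    (he₁ : G.Adj x₁ y₁) (he₂ : G.Adj x₂ y₂)
    (hne₁ : ¬ G.Adj x₁ y₂) (hne₂ : ¬ G.Adj x₂ y₁) :
    ∀ z ∈ V₃,
      (G.Adj z x₁ ∧ G.Adj z x₂ ∧ ¬ G.Adj z y₁ ∧ ¬ G.Adj z y₂) ∨
      (G.Adj z y₁ ∧ G.Adj z y₂ ∧ ¬ G.Adj z x₁ ∧ ¬ G.Adj z x₂) := by
  intro z hz
  push_neg at hnoK3 hno3P1
  have h1 := hno3P1 x₁ hx₁ y₂ hy₂ z hz hne₁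
  have h2 := hno3P1 x₂ hx₂ y₁ hy₁ z hz hne₂
  have k1 := hnoK3 x₁ hx₁ y₁ hy₁ z hz he₁
  have k2 := hnoK3 x₂ hx₂ y₂ hy₂ z hz he₂
  by_cases hzx₁ : G.Adj z x₁
  · have hzy₁ : ¬ G.Adj z y₁ := fun h => k1 h.symm hzx₁.symm
    have hzx₂ : G.Adj z x₂ := (h2 (fun hh => hzy₁ hh.symm)).symm
    exact Or.inl ⟨hzx₁, hzx₂, hzy₁, fun h => k2 h.symm hzx₂.symm⟩
  · have hzy₂ : G.Adj z y₂ := by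
      by_contra h
      exact hzx₁ (h1 (fun hh => h hh.symm)).symm
    have hzx₂ : ¬ G.Adj z x₂ := fun h => k2 hzy₂.symm h.symm
    have hzy₁ : G.Adj z y₁ := by
      by_contra h
      exact hzx₂ (h2 (fun hh => h hh.symm)).symm
    exact Or.inr ⟨hzy₁, hzy₂, hzx₁, hzx₂⟩
end

section
/- Let G be a (K_3, P_2 + P_4)-free graph containing an induced 5-cycle on vertices v_1, ..., v_5 in cyclic order. Let U be the set of vertices with no neighbour on the cycle, and for each i let W_i be the set of vertices whose unique neighbour on the cycle is v_i. Then for each i, the set U ∪ W_i is an independent set. -/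
/-- A graph is `(P₂ + P₄)`-free if it contains no six distinct vertices inducing
the disjoint union of a 2-vertex path `a b` and a 4-vertex path `c d e f`. -/
def P2P4Free {V : Type*} (G : SimpleGraph V) : Prop :=
  ¬ ∃ a b c d e f : V, [a, b, c, d, e, f].Nodup ∧
    G.Adj a b ∧ G.Adj c d ∧ G.Adj d e ∧ G.Adj e f ∧
    ¬ G.Adj a c ∧ ¬ G.Adj a d ∧ ¬ G.Adj a e ∧ ¬ G.Adj a f ∧
    ¬ G.Adj b c ∧ ¬ G.Adj b d ∧ ¬ G.Adj b e ∧ ¬ G.Adj b f ∧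
    ¬ G.Adj c e ∧ ¬ G.Adj c f ∧ ¬ G.Adj d f

/-- The set of vertices not on the 5-cycle `v` with no neighbour on the cycle. -/
def cycU {V : Type*} (G : SimpleGraph V) (v : Fin 5 → V) : Set V :=
  {u | u ∉ Set.range v ∧ ∀ j : Fin 5, ¬ G.Adj u (v j)}

/-- The set of vertices not on the 5-cycle `v` whose unique neighbour on the
cycle is `v i`. -/
def cycW {V : Type*} (G : SimpleGraph V) (v : Fin 5 → V) (i : Fin 5) : Set V :=
  {u | u ∉ Set.range v ∧ ∀ j : Fin 5, G.Adj u (v j) ↔ j = i}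

/-- The set of vertices not on the 5-cycle `v` adjacent on the cycle to exactly
`v (i - 1)` and `v (i + 1)`. -/
def cycV {V : Type*} (G : SimpleGraph V) (v : Fin 5 → V) (i : Fin 5) : Set V :=
  {u | u ∉ Set.range v ∧ ∀ j : Fin 5, G.Adj u (v j) ↔ (j = i - 1 ∨ j = i + 1)}

/-- In a `(K₃, P₂ + P₄)`-free graph with an induced 5-cycle, for each `i` the
set `U ∪ Wᵢ` is independent. -/
theorem K3P2P4_UWi_independent {V : Type*} [Fintype V] (G : SimpleGraph V)
    (hK3 : G.CliqueFree 3) (hP2P4 : P2P4Free G)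
    (v : Fin 5 → V) (hinj : Function.Injective v)
    (hcyc : ∀ i : Fin 5, G.Adj (v i) (v (i + 1)))
    (hindC : ∀ i j : Fin 5, G.Adj (v i) (v j) → j = i + 1 ∨ j = i - 1) :
    ∀ i : Fin 5, ∀ x ∈ cycU G v ∪ cycW G v i, ∀ y ∈ cycU G v ∪ cycW G v i,
      ¬ G.Adj x y := by
  intro i x hx y hy hadj
  have hxr : x ∉ Set.range v := by rcases hx with h | h <;> exact h.1
  have hyr : y ∉ Set.range v := by rcases hy with h | h <;> exact h.1
  have hxn : ∀ k : Fin 5, k ≠ 0 → ¬ G.Adj x (v (i + k)) := by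
    intro k hk
    rcases hx with h | h
    · exact h.2 _
    · rw [h.2]
      intro he
      apply hk
      have : i + k = i + 0 := by rw [he]; open Fin.CommRing in ring
      exact add_left_cancel this
  have hyn : ∀ k : Fin 5, k ≠ 0 → ¬ G.Adj y (v (i + k)) := by
    intro k hk
    rcases hy with h | h
    · exact h.2 _
    · rw [h.2]
      intro he
      apply hk
      have : i + k = i + 0 := by rw [he]; open Fin.CommRing in ring
      exact add_left_cancel this
  have key : ∀ a b : Fin 5, a ≠ b - 1 → a ≠ b + 1 → ¬ G.Adj (v (i + b)) (v (i + a)) := by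
    intro a b h1 h2 h
    rcases hindC _ _ h with h' | h'
    · apply h2
      have : i + a = i + (b + 1) := by rw [h']; open Fin.CommRing in ring
      exact add_left_cancel this
    · apply h1
      have : i + a = i + (b - 1) := by rw [h']; open Fin.CommRing in ring
      exact add_left_cancel this
  have hvv : ∀ a b : Fin 5, a ≠ b → v (i + a) ≠ v (i + b) := by
    intro a b h h'
    exact h (add_left_cancel (hinj h'))
  have hxv : ∀ k : Fin 5, x ≠ v k := fun k h => hxr ⟨k, h.symm⟩
  have hyv : ∀ k : Fin 5, y ≠ v k := fun k h => hyr ⟨k, h.symm⟩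
  have e12 : G.Adj (v (i + 1)) (v (i + 2)) := by
    have := hcyc (i + 1); rwa [show i + 1 + 1 = i + 2 by open Fin.CommRing in ring] at this
  have e23 : G.Adj (v (i + 2)) (v (i + 3)) := by
    have := hcyc (i + 2); rwa [show i + 2 + 1 = i + 3 by open Fin.CommRing in ring] at this
  have e34 : G.Adj (v (i + 3)) (v (i + 4)) := by
    have := hcyc (i + 3); rwa [show i + 3 + 1 = i + 4 by open Fin.CommRing in ring] at this
  apply hP2P4
  refine ⟨x, y, v (i + 1), v (i + 2), v (i + 3), v (i + 4), ?_, hadj, e12, e23, e34,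
    hxn 1 (by decide), hxn 2 (by decide), hxn 3 (by decide), hxn 4 (by decide),
    hyn 1 (by decide), hyn 2 (by decide), hyn 3 (by decide), hyn 4 (by decide),
    key 3 1 (by decide) (by decide), key 4 1 (by decide) (by decide),
    key 4 2 (by decide) (by decide)⟩
  simp only [List.nodup_cons, List.mem_cons, List.not_mem_nil, or_false, not_or,
    List.nodup_nil, and_true]
  exact ⟨⟨hadj.ne, hxv _, hxv _, hxv _, hxv _⟩, ⟨hyv _, hyv _, hyv _, hyv _⟩,
    ⟨hvv 1 2 (by decide), hvv 1 3 (by decide), hvv 1 4 (by decide)⟩,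
    ⟨hvv 2 3 (by decide), hvv 2 4 (by decide)⟩, ⟨hvv 3 4 (by decide), not_false⟩⟩
end

section
/- Let G be a (K_3, P_1 + P_5)-free graph containing an induced 5-cycle on vertices v_1, ..., v_5 in cyclic order. For each i, let W_i be the set of vertices whose unique neighbour on the cycle is v_i. Then W_i is complete to W_{i-1} ∪ W_{i+1} (every vertex of W_i is adjacent to every vertex of W_{i-1} ∪ W_{i+1}), with indices mod 5. -/
/-- A graph is `(P₁ + P₅)`-free if it contains no six distinct vertices inducing
the disjoint union of an isolated vertex `a` and a 5-vertex path `b c d e f`. -/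
def P1P5Free {V : Type*} (G : SimpleGraph V) : Prop :=
  ¬ ∃ a b c d e f : V, [a, b, c, d, e, f].Nodup ∧
    G.Adj b c ∧ G.Adj c d ∧ G.Adj d e ∧ G.Adj e f ∧
    ¬ G.Adj a b ∧ ¬ G.Adj a c ∧ ¬ G.Adj a d ∧ ¬ G.Adj a e ∧ ¬ G.Adj a f ∧
    ¬ G.Adj b d ∧ ¬ G.Adj b e ∧ ¬ G.Adj b f ∧
    ¬ G.Adj c e ∧ ¬ G.Adj c f ∧ ¬ G.Adj d f

/-- In a `(K₃, P₁ + P₅)`-free graph with an induced 5-cycle, `Wᵢ` is complete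
to `W_{i-1} ∪ W_{i+1}`. -/
theorem K3P1P5_Wi_complete {V : Type*} [Fintype V] (G : SimpleGraph V)
    (hK3 : G.CliqueFree 3) (hP1P5 : P1P5Free G)
    (v : Fin 5 → V) (hinj : Function.Injective v)
    (hcyc : ∀ i : Fin 5, G.Adj (v i) (v (i + 1)))
    (hindC : ∀ i j : Fin 5, G.Adj (v i) (v j) → j = i + 1 ∨ j = i - 1) :
    ∀ i : Fin 5, ∀ x ∈ cycW G v i, ∀ y ∈ cycW G v (i - 1) ∪ cycW G v (i + 1),
      G.Adj x y := by
  intro i x hx y hy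
  obtain ⟨hxr, hxadj⟩ := hx
  by_contra hxy
  set w : Fin 5 → V := fun a => v (i + a) with hw
  have em1 : i - 1 = i + 4 := by
    have : (-1 : Fin 5) = 4 := by decide
    rw [sub_eq_add_neg, this]
  have hadjw : ∀ a : Fin 5, G.Adj (w a) (w (a + 1)) := by
    intro a
    have := hcyc (i + a)
    rwa [add_assoc] at this
  have hnadjw : ∀ a b : Fin 5, a + 1 ≠ b → a - 1 ≠ b → ¬ G.Adj (w a) (w b) := by
    intro a b h1 h2 hadj
    rcases hindC (i + a) (i + b) hadj with h | h
    · rw [add_assoc] at h; exact h1 (add_left_cancel h).symm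
    · rw [add_sub_assoc] at h; exact h2 (add_left_cancel h).symm
  have hwne : ∀ a b : Fin 5, a ≠ b → w a ≠ w b := by
    intro a b h e; exact h (add_left_cancel (hinj e))
  have hxw : ∀ a : Fin 5, a ≠ 0 → ¬ G.Adj x (w a) := by
    intro a ha h
    have := (hxadj (i + a)).mp h
    have : a = 0 := add_left_cancel (show i + a = i + 0 by simpa using this)
    exact ha this
  have hxi : G.Adj x (w 0) := by
    have := (hxadj i).mpr rfl
    simpa [hw] using this
  have hxnr : ∀ a : Fin 5, x ≠ w a := by
    intro a h; exact hxr ⟨i + a, h.symm⟩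
  cases hy with
  | inl hy =>
    obtain ⟨hyr, hyadj⟩ := hy
    have hyw : ∀ a : Fin 5, a ≠ 4 → ¬ G.Adj y (w a) := by
      intro a ha h
      have h' := (hyadj (i + a)).mp h
      rw [em1] at h'
      exact ha (add_left_cancel h')
    have hy4 : G.Adj y (w 4) := by
      have := (hyadj (i - 1)).mpr rfl
      rwa [em1] at this
    have hynr : ∀ a : Fin 5, y ≠ w a := by
      intro a h; exact hyr ⟨i + a, h.symm⟩
    have hxy' : x ≠ y := by
      intro h; rw [h] at hxi; exact hyw 0 (by decide) hxi
    refine hP1P5 ⟨x, y, w 4, w 3, w 2, w 1, ?_, hy4, (hadjw 3).symm, (hadjw 2).symm,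
      (hadjw 1).symm, hxy, hxw 4 (by decide), hxw 3 (by decide), hxw 2 (by decide),
      hxw 1 (by decide), hyw 3 (by decide), hyw 2 (by decide), hyw 1 (by decide),
      hnadjw 4 2 (by decide) (by decide), hnadjw 4 1 (by decide) (by decide),
      hnadjw 3 1 (by decide) (by decide)⟩
    simp only [List.nodup_cons, List.mem_cons, List.not_mem_nil, or_false,
      List.nodup_nil, and_true, not_or]
    exact ⟨⟨hxy', hxnr 4, hxnr 3, hxnr 2, hxnr 1⟩, ⟨hynr 4, hynr 3, hynr 2, hynr 1⟩,
      ⟨hwne 4 3 (by decide), hwne 4 2 (by decide), hwne 4 1 (by decide)⟩,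
      ⟨hwne 3 2 (by decide), hwne 3 1 (by decide)⟩, ⟨hwne 2 1 (by decide), not_false⟩⟩
  | inr hy =>
    obtain ⟨hyr, hyadj⟩ := hy
    have hyw : ∀ a : Fin 5, a ≠ 1 → ¬ G.Adj y (w a) := by
      intro a ha h
      have h' := (hyadj (i + a)).mp h
      exact ha (add_left_cancel h')
    have hy1 : G.Adj y (w 1) := (hyadj (i + 1)).mpr rfl
    have hynr : ∀ a : Fin 5, y ≠ w a := by
      intro a h; exact hyr ⟨i + a, h.symm⟩
    have hxy' : x ≠ y := by
      intro h; rw [h] at hxi; exact hyw 0 (by decide) hxi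
    refine hP1P5 ⟨x, y, w 1, w 2, w 3, w 4, ?_, hy1, hadjw 1, hadjw 2,
      hadjw 3, hxy, hxw 1 (by decide), hxw 2 (by decide), hxw 3 (by decide),
      hxw 4 (by decide), hyw 2 (by decide), hyw 3 (by decide), hyw 4 (by decide),
      hnadjw 1 3 (by decide) (by decide), hnadjw 1 4 (by decide) (by decide),
      hnadjw 2 4 (by decide) (by decide)⟩
    simp only [List.nodup_cons, List.mem_cons, List.not_mem_nil, or_false,
      List.nodup_nil, and_true, not_or]
    exact ⟨⟨hxy', hxnr 1, hxnr 2, hxnr 3, hxnr 4⟩, ⟨hynr 1, hynr 2, hynr 3, hynr 4⟩,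
      ⟨hwne 1 2 (by decide), hwne 1 3 (by decide), hwne 1 4 (by decide)⟩,
      ⟨hwne 2 3 (by decide), hwne 2 4 (by decide)⟩, ⟨hwne 3 4 (by decide), not_false⟩⟩
end

section
/- Let G be a (K_3, P_2 + P_4)-free graph containing an induced 5-cycle on vertices v_1, ..., v_5 in cyclic order, and for each i let W_i be the set of vertices whose unique neighbour on the cycle is v_i. Then for each i, W_i is either complete or anti-complete to W_{i+1} (indices mod 5). -/
lemma nodup6 {α} {a b c d e f : α} (h1 : a≠b) (h2 : a≠c) (h3 : a≠d) (h4 : a≠e) (h5 : a≠f)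
    (h6 : b≠c) (h7 : b≠d) (h8 : b≠e) (h9 : b≠f) (h10 : c≠d) (h11 : c≠e) (h12 : c≠f)
    (h13 : d≠e) (h14 : d≠f) (h15 : e≠f) : [a,b,c,d,e,f].Nodup := by simp_all

/-- In a `(K₃, P₂ + P₄)`-free graph with an induced 5-cycle, `Wᵢ` is either
complete or anti-complete to `W_{i+1}`. -/
theorem K3P2P4_Wi_comp_or_anticomp {V : Type*} [Fintype V] (G : SimpleGraph V)
    (hK3 : G.CliqueFree 3) (hP2P4 : P2P4Free G)
    (v : Fin 5 → V) (hinj : Function.Injective v)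
    (hcyc : ∀ i : Fin 5, G.Adj (v i) (v (i + 1)))
    (hindC : ∀ i j : Fin 5, G.Adj (v i) (v j) → j = i + 1 ∨ j = i - 1) :
    ∀ i : Fin 5,
      (∀ x ∈ cycW G v i, ∀ y ∈ cycW G v (i + 1), G.Adj x y) ∨
      (∀ x ∈ cycW G v i, ∀ y ∈ cycW G v (i + 1), ¬ G.Adj x y) := by
  classical
  have ht : ∀ a b c : V, G.Adj a b → G.Adj b c → G.Adj a c → False := by
    intro a b c h1 h2 h3
    exact hK3 {a, b, c} (SimpleGraph.is3Clique_triple_iff.mpr ⟨h1, h3, h2⟩)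
  have hnc : ∀ a b : Fin 5, b ≠ a + 1 → b ≠ a - 1 → ¬ G.Adj (v a) (v b) :=
    fun a b h1 h2 h => ((hindC a b h).elim h1 h2)
  intro i
  by_contra hcon
  push_neg at hcon
  obtain ⟨⟨x2, hx2, y2, hy2, hnadj⟩, x1, hx1, y1, hy1, hadj⟩ := hcon
  obtain ⟨hx1r, hx1a⟩ := hx1
  obtain ⟨hx2r, hx2a⟩ := hx2
  obtain ⟨hy1r, hy1a⟩ := hy1
  obtain ⟨hy2r, hy2a⟩ := hy2
  by_cases hA : G.Adj x1 y2
  · -- P2 = v(i+2) v(i+3), P4 = x2 - v i - x1 - y2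
    refine hP2P4 ⟨v (i+2), v (i+3), x2, v i, x1, y2, ?_,
      (by decide : ∀ j : Fin 5, j+2+1 = j+3) i ▸ hcyc (i+2),
      (hx2a i).mpr rfl, ((hx1a i).mpr rfl).symm, hA,
      ?_, ?_, ?_, ?_, ?_, ?_, ?_, ?_, ?_, hnadj, ?_⟩
    · refine nodup6 (hinj.ne ((by decide : ∀ j : Fin 5, j+2 ≠ j+3) i))
        (fun h => hx2r ⟨_, h⟩) (hinj.ne ((by decide : ∀ j : Fin 5, j+2 ≠ j) i))
        (fun h => hx1r ⟨_, h⟩) (fun h => hy2r ⟨_, h⟩)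
        (fun h => hx2r ⟨_, h⟩) (hinj.ne ((by decide : ∀ j : Fin 5, j+3 ≠ j) i))
        (fun h => hx1r ⟨_, h⟩) (fun h => hy2r ⟨_, h⟩)
        (fun h => hx2r ⟨_, h.symm⟩) (fun h => hnadj (h ▸ hA)) ?_
        (fun h => hx1r ⟨_, h⟩) (fun h => hy2r ⟨_, h⟩) hA.ne
      · intro h
        exact (by decide : ∀ j : Fin 5, ¬ (j + 1 = j)) i
          ((hx2a (i+1)).mp (h ▸ (hy2a (i+1)).mpr rfl))
    · exact fun h => (by decide : ∀ j : Fin 5, ¬ (j+2 = j)) i ((hx2a (i+2)).mp h.symm)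
    · exact hnc (i+2) i ((by decide : ∀ j : Fin 5, j ≠ (j+2)+1) i)
        ((by decide : ∀ j : Fin 5, j ≠ (j+2)-1) i)
    · exact fun h => (by decide : ∀ j : Fin 5, ¬ (j+2 = j)) i ((hx1a (i+2)).mp h.symm)
    · exact fun h => (by decide : ∀ j : Fin 5, ¬ (j+2 = j+1)) i ((hy2a (i+2)).mp h.symm)
    · exact fun h => (by decide : ∀ j : Fin 5, ¬ (j+3 = j)) i ((hx2a (i+3)).mp h.symm)
    · exact hnc (i+3) i ((by decide : ∀ j : Fin 5, j ≠ (j+3)+1) i)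
        ((by decide : ∀ j : Fin 5, j ≠ (j+3)-1) i)
    · exact fun h => (by decide : ∀ j : Fin 5, ¬ (j+3 = j)) i ((hx1a (i+3)).mp h.symm)
    · exact fun h => (by decide : ∀ j : Fin 5, ¬ (j+3 = j+1)) i ((hy2a (i+3)).mp h.symm)
    · exact fun h => ht x2 (v i) x1 ((hx2a i).mpr rfl) (((hx1a i).mpr rfl).symm) h
    · exact fun h => (by decide : ∀ j : Fin 5, ¬ (j = j+1)) i ((hy2a i).mp h.symm)
  · -- P2 = v(i+3) v(i+4), P4 = y2 - v(i+1) - y1 - x1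
    refine hP2P4 ⟨v (i+3), v (i+4), y2, v (i+1), y1, x1, ?_,
      (by decide : ∀ j : Fin 5, j+3+1 = j+4) i ▸ hcyc (i+3),
      (hy2a (i+1)).mpr rfl, ((hy1a (i+1)).mpr rfl).symm, hadj.symm,
      ?_, ?_, ?_, ?_, ?_, ?_, ?_, ?_, ?_, fun h => hA h.symm, ?_⟩
    · refine nodup6 (hinj.ne ((by decide : ∀ j : Fin 5, j+3 ≠ j+4) i))
        (fun h => hy2r ⟨_, h⟩) (hinj.ne ((by decide : ∀ j : Fin 5, j+3 ≠ j+1) i))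
        (fun h => hy1r ⟨_, h⟩) (fun h => hx1r ⟨_, h⟩)
        (fun h => hy2r ⟨_, h⟩) (hinj.ne ((by decide : ∀ j : Fin 5, j+4 ≠ j+1) i))
        (fun h => hy1r ⟨_, h⟩) (fun h => hx1r ⟨_, h⟩)
        (fun h => hy2r ⟨_, h.symm⟩) (fun h => hA (h.symm ▸ hadj)) ?_
        (fun h => hy1r ⟨_, h⟩) (fun h => hx1r ⟨_, h⟩) (fun h => hadj.ne h.symm)
      · intro h
        exact (by decide : ∀ j : Fin 5, ¬ (j + 1 = j)) i
          ((hx1a (i+1)).mp (h ▸ (hy2a (i+1)).mpr rfl))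
    · exact fun h => (by decide : ∀ j : Fin 5, ¬ (j+3 = j+1)) i ((hy2a (i+3)).mp h.symm)
    · exact hnc (i+3) (i+1) ((by decide : ∀ j : Fin 5, j+1 ≠ (j+3)+1) i)
        ((by decide : ∀ j : Fin 5, j+1 ≠ (j+3)-1) i)
    · exact fun h => (by decide : ∀ j : Fin 5, ¬ (j+3 = j+1)) i ((hy1a (i+3)).mp h.symm)
    · exact fun h => (by decide : ∀ j : Fin 5, ¬ (j+3 = j)) i ((hx1a (i+3)).mp h.symm)
    · exact fun h => (by decide : ∀ j : Fin 5, ¬ (j+4 = j+1)) i ((hy2a (i+4)).mp h.symm)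
    · exact hnc (i+4) (i+1) ((by decide : ∀ j : Fin 5, j+1 ≠ (j+4)+1) i)
        ((by decide : ∀ j : Fin 5, j+1 ≠ (j+4)-1) i)
    · exact fun h => (by decide : ∀ j : Fin 5, ¬ (j+4 = j+1)) i ((hy1a (i+4)).mp h.symm)
    · exact fun h => (by decide : ∀ j : Fin 5, ¬ (j+4 = j)) i ((hx1a (i+4)).mp h.symm)
    · exact fun h => ht y2 (v (i+1)) y1 ((hy2a (i+1)).mpr rfl) (((hy1a (i+1)).mpr rfl).symm) h
    · exact fun h => (by decide : ∀ j : Fin 5, ¬ (j+1 = j)) i ((hx1a (i+1)).mp h.symm)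
end

section
/- Let G be a (K_3, P_2 + P_4)-free graph containing an induced 5-cycle on vertices v_1, ..., v_5 in cyclic order, and for each i let W_i be the set of vertices whose unique neighbour on the cycle is v_i. Then for each i, the graph induced by W_i ∪ W_{i+2} is P_4-free (indices mod 5). -/
/-- In a `(K₃, P₂ + P₄)`-free graph with an induced 5-cycle, the subgraph
induced by `Wᵢ ∪ W_{i+2}` is `P₄`-free. -/
theorem K3P2P4_WiWi2_P4free {V : Type*} [Fintype V] (G : SimpleGraph V)
    (hK3 : G.CliqueFree 3) (hP2P4 : P2P4Free G)
    (v : Fin 5 → V) (hinj : Function.Injective v)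
    (hcyc : ∀ i : Fin 5, G.Adj (v i) (v (i + 1)))
    (hindC : ∀ i j : Fin 5, G.Adj (v i) (v j) → j = i + 1 ∨ j = i - 1) :
    ∀ i : Fin 5, ¬ ∃ a b c d : V, [a, b, c, d].Nodup ∧
      a ∈ cycW G v i ∪ cycW G v (i + 2) ∧ b ∈ cycW G v i ∪ cycW G v (i + 2) ∧
      c ∈ cycW G v i ∪ cycW G v (i + 2) ∧ d ∈ cycW G v i ∪ cycW G v (i + 2) ∧
      G.Adj a b ∧ G.Adj b c ∧ G.Adj c d ∧
      ¬ G.Adj a c ∧ ¬ G.Adj a d ∧ ¬ G.Adj b d := by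
  intro i
  rintro ⟨a, b, c, d, hnd, ha, hb, hc, hd, hab, hbc, hcd, hac, had, hbd⟩
  have hfin : ∀ i : Fin 5, i + 3 ≠ i ∧ i + 4 ≠ i ∧ i + 3 ≠ i + 2 ∧ i + 4 ≠ i + 2 ∧
      (i + 3) + 1 = i + 4 ∧ i + 3 ≠ i + 4 := by decide
  obtain ⟨h3i, h4i, h32, h42, h34, h34'⟩ := hfin i
  have key : ∀ u ∈ cycW G v i ∪ cycW G v (i + 2),
      u ∉ Set.range v ∧ ¬ G.Adj u (v (i + 3)) ∧ ¬ G.Adj u (v (i + 4)) := by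
    rintro u (⟨hr, h⟩ | ⟨hr, h⟩)
    · exact ⟨hr, fun hadj => h3i ((h (i+3)).1 hadj), fun hadj => h4i ((h (i+4)).1 hadj)⟩
    · exact ⟨hr, fun hadj => h32 ((h (i+3)).1 hadj), fun hadj => h42 ((h (i+4)).1 hadj)⟩
  obtain ⟨hra, h3a, h4a⟩ := key a ha
  obtain ⟨hrb, h3b, h4b⟩ := key b hb
  obtain ⟨hrc, h3c, h4c⟩ := key c hc
  obtain ⟨hrd, h3d, h4d⟩ := key d hd
  have hxy : G.Adj (v (i + 3)) (v (i + 4)) := by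
    have := hcyc (i + 3); rwa [h34] at this
  apply hP2P4
  refine ⟨v (i + 3), v (i + 4), a, b, c, d, ?_, hxy, hab, hbc, hcd,
    fun h => h3a h.symm, fun h => h3b h.symm, fun h => h3c h.symm, fun h => h3d h.symm,
    fun h => h4a h.symm, fun h => h4b h.symm, fun h => h4c h.symm, fun h => h4d h.symm,
    hac, had, hbd⟩
  simp only [List.nodup_cons, List.mem_cons, List.not_mem_nil, or_false,
    List.nodup_nil, and_true] at hnd ⊢
  have hne : ∀ u : V, u ∉ Set.range v → ∀ j : Fin 5, v j ≠ u := by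
    intro u hu j h; exact hu ⟨j, h⟩
  refine ⟨?_, ?_, hnd⟩
  · rintro (h | h | h | h | h)
    exacts [h34' (hinj h), hne a hra _ h, hne b hrb _ h, hne c hrc _ h, hne d hrd _ h]
  · rintro (h | h | h | h)
    exacts [hne a hra _ h, hne b hrb _ h, hne c hrc _ h, hne d hrd _ h]
end

section
/- Let G be a (K_3, P_1 + P_5)-free graph containing an induced 5-cycle on vertices v_1, ..., v_5 in cyclic order, and for each i let V_i be the set of vertices adjacent on the cycle to exactly v_{i-1} and v_{i+1}. Then every vertex of V_i is adjacent either to all vertices of V_{i-1} or to all vertices of V_{i+1} (indices mod 5). -/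
/-- In a `(K₃, P₁ + P₅)`-free graph with an induced 5-cycle, every vertex of
`Vᵢ` dominates either `V_{i-1}` or `V_{i+1}`. -/
theorem K3P1P5_Vi_dominates {V : Type*} [Fintype V] (G : SimpleGraph V)
    (hK3 : G.CliqueFree 3) (hP1P5 : P1P5Free G)
    (v : Fin 5 → V) (hinj : Function.Injective v)
    (hcyc : ∀ i : Fin 5, G.Adj (v i) (v (i + 1)))
    (hindC : ∀ i j : Fin 5, G.Adj (v i) (v j) → j = i + 1 ∨ j = i - 1) :
    ∀ i : Fin 5, ∀ x ∈ cycV G v i,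
      (∀ y ∈ cycV G v (i - 1), G.Adj x y) ∨
      (∀ y ∈ cycV G v (i + 1), G.Adj x y) := by
  intro i x hx
  by_contra hcon
  push_neg at hcon
  obtain ⟨⟨y, hy, hxy⟩, z, hz, hxz⟩ := hcon
  obtain ⟨hxr, hxadj⟩ := hx
  obtain ⟨hyr, hyadj⟩ := hy
  obtain ⟨hzr, hzadj⟩ := hz
  have F1 : ∀ k : Fin 5, k = k - 1 + 1 := by decide
  have F2 : ∀ k : Fin 5, k = k + 1 - 1 := by decide
  have F3 : ∀ k : Fin 5, k + 2 = k + 1 + 1 := by decide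
  have F4 : ∀ k : Fin 5, ¬(k + 1 = k - 1 - 1 ∨ k + 1 = k - 1 + 1) := by decide
  have F5 : ∀ k : Fin 5, ¬(k - 1 = k + 1 - 1 ∨ k - 1 = k + 1 + 1) := by decide
  have F6 : ∀ k : Fin 5, ¬(k - 1 - 1 = k + 1 - 1 ∨ k - 1 - 1 = k + 1 + 1) := by decide
  have F7 : ∀ k : Fin 5, ¬(k - 1 = k - 1 - 1 ∨ k - 1 = k - 1 + 1) := by decide
  have F9 : ∀ k : Fin 5, ¬(k + 2 = k - 1 - 1 ∨ k + 2 = k - 1 + 1) := by decide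
  have F10 : ∀ k : Fin 5, ¬(k + 1 = k - 1 + 1 ∨ k + 1 = k - 1 - 1) := by decide
  have F11 : ∀ k : Fin 5, ¬(k + 2 = k - 1 + 1 ∨ k + 2 = k - 1 - 1) := by decide
  have F13 : ∀ k : Fin 5, ¬(k + 2 = k - 1 ∨ k + 2 = k + 1) := by decide
  have F14 : ∀ k : Fin 5, ¬(k + 1 = k + 1 - 1 ∨ k + 1 = k + 1 + 1) := by decide
  have D1 : ∀ k : Fin 5, k - 1 ≠ k + 1 := by decide
  have D2 : ∀ k : Fin 5, k - 1 ≠ k + 2 := by decide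
  have D3 : ∀ k : Fin 5, k + 1 ≠ k + 2 := by decide
  have hxm : G.Adj x (v (i - 1)) := (hxadj _).mpr (Or.inl rfl)
  have hxp : G.Adj x (v (i + 1)) := (hxadj _).mpr (Or.inr rfl)
  have hyi : G.Adj y (v i) := (hyadj i).mpr (Or.inr (F1 i))
  have hym : G.Adj y (v (i - 1 - 1)) := (hyadj _).mpr (Or.inl rfl)
  have hzi : G.Adj z (v i) := (hzadj i).mpr (Or.inl (F2 i))
  have hzp : G.Adj z (v (i + 2)) := (hzadj _).mpr (Or.inr (F3 i))
  classical
  have hyz : ¬ G.Adj y z := by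
    intro h
    exact hK3 {y, z, v i} (SimpleGraph.is3Clique_triple_iff.mpr ⟨h, hyi, hzi⟩)
  have hyx : y ≠ x := fun h => F4 i ((hyadj (i + 1)).mp (h ▸ hxp))
  have hxzne : x ≠ z := fun h => F5 i ((hzadj (i - 1)).mp (h ▸ hxm))
  have hyzne : y ≠ z := fun h => F6 i ((hzadj (i - 1 - 1)).mp (h ▸ hym))
  apply hP1P5
  refine ⟨y, v (i - 1), x, v (i + 1), v (i + 2), z, ?_, G.adj_symm hxm, hxp,
    F3 i ▸ hcyc (i + 1), G.adj_symm hzp, ?_, ?_, ?_, ?_, hyz, ?_, ?_, ?_, ?_, hxz, ?_⟩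
  · simp only [List.nodup_cons, List.mem_cons, List.not_mem_nil, or_false,
      List.nodup_nil, and_true, not_or]
    refine ⟨⟨fun h => hyr ⟨_, h.symm⟩, hyx, fun h => hyr ⟨_, h.symm⟩,
        fun h => hyr ⟨_, h.symm⟩, hyzne⟩,
      ⟨fun h => hxr ⟨_, h⟩, fun h => D1 i (hinj h), fun h => D2 i (hinj h),
        fun h => hzr ⟨_, h⟩⟩,
      ⟨fun h => hxr ⟨_, h.symm⟩, fun h => hxr ⟨_, h.symm⟩, hxzne⟩,
      ⟨fun h => D3 i (hinj h), fun h => hzr ⟨_, h⟩⟩,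
      ⟨fun h => hzr ⟨_, h⟩, not_false⟩⟩
  · exact fun h => F7 i ((hyadj _).mp h)
  · exact fun h => hxy (G.adj_symm h)
  · exact fun h => F4 i ((hyadj _).mp h)
  · exact fun h => F9 i ((hyadj _).mp h)
  · exact fun h => F10 i (hindC _ _ h)
  · exact fun h => F11 i (hindC _ _ h)
  · exact fun h => F5 i ((hzadj _).mp (G.adj_symm h))
  · exact fun h => F13 i ((hxadj _).mp h)
  · exact fun h => F14 i ((hzadj _).mp (G.adj_symm h))
end

section
/- Let G be a (K_3, P_2 + P_4)-free graph containing an induced 5-cycle on vertices v_1, ..., v_5 in cyclic order. Let W_i be the set of vertices whose unique cycle-neighbour is v_i, and V_i the set of vertices adjacent on the cycle to exactly v_{i-1} and v_{i+1}. Then for each i, every vertex of V_i is either complete or anti-complete to W_i. -/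
/-- In a `(K₃, P₂ + P₄)`-free graph with an induced 5-cycle, every vertex of
`Vᵢ` is either complete or anti-complete to `Wᵢ`. -/
theorem K3P2P4_Vi_triv_Wi {V : Type*} [Fintype V] (G : SimpleGraph V)
    (hK3 : G.CliqueFree 3) (hP2P4 : P2P4Free G)
    (v : Fin 5 → V) (hinj : Function.Injective v)
    (hcyc : ∀ i : Fin 5, G.Adj (v i) (v (i + 1)))
    (hindC : ∀ i j : Fin 5, G.Adj (v i) (v j) → j = i + 1 ∨ j = i - 1) :
    ∀ i : Fin 5, ∀ x ∈ cycV G v i,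
      (∀ y ∈ cycW G v i, G.Adj x y) ∨ (∀ y ∈ cycW G v i, ¬ G.Adj x y) := by

  intro i x hx
  by_contra hcon
  push_neg at hcon
  obtain ⟨⟨z, hzW, hxz⟩, y, hyW, hxy⟩ := hcon
  obtain ⟨hxR, hxadj⟩ := hx
  obtain ⟨hyR, hyadj⟩ := hyW
  obtain ⟨hzR, hzadj⟩ := hzW
  have hxv : ∀ j : Fin 5, x ≠ v j := fun j h => hxR ⟨j, h.symm⟩
  have hyv : ∀ j : Fin 5, y ≠ v j := fun j h => hyR ⟨j, h.symm⟩
  have hzv : ∀ j : Fin 5, z ≠ v j := fun j h => hzR ⟨j, h.symm⟩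
  have hxy' : x ≠ y := G.ne_of_adj hxy
  have hxz' : x ≠ z := by
    intro h
    have : G.Adj z (v (i + 1)) := h ▸ (hxadj (i + 1)).mpr (Or.inr rfl)
    have := (hzadj (i + 1)).mp this
    omega
  have hyz' : y ≠ z := fun h => hxz (h ▸ hxy)
  have hyzn : ¬ G.Adj y z := by
    intro h
    classical
    exact hK3 {y, z, v i} (SimpleGraph.is3Clique_triple_iff.mpr
      ⟨h, (hyadj i).mpr rfl, (hzadj i).mpr rfl⟩)
  apply hP2P4
  have hc23 : G.Adj (v (i + 2)) (v (i + 3)) := by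
    have h := hcyc (i + 2); rwa [show i + 2 + 1 = i + 3 by omega] at h
  refine ⟨v (i + 2), v (i + 3), x, y, v i, z, ?_, hc23, hxy,
    ((hyadj i).mpr rfl), ((hzadj i).mpr rfl).symm, ?_, ?_, ?_, ?_, ?_, ?_, ?_, ?_, ?_, hxz, hyzn⟩
  · simp only [List.nodup_cons, List.mem_cons, List.not_mem_nil, List.nodup_nil, or_false,
      not_or, and_true]
    refine ⟨⟨?_, (hxv _).symm, (hyv _).symm, ?_, (hzv _).symm⟩,
      ⟨(hxv _).symm, (hyv _).symm, ?_, (hzv _).symm⟩,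
      ⟨hxy', hxv i, hxz'⟩, ⟨hyv i, hyz'⟩, (hzv i).symm, not_false⟩
    all_goals intro h; have := hinj h; omega
  · intro h; rcases (hxadj _).mp h.symm with h' | h' <;> omega
  · intro h; have := (hyadj _).mp h.symm; omega
  · intro h; rcases hindC _ _ h with h' | h' <;> omega
  · intro h; have := (hzadj _).mp h.symm; omega
  · intro h; rcases (hxadj _).mp h.symm with h' | h' <;> omega
  · intro h; have := (hyadj _).mp h.symm; omega
  · intro h; rcases hindC _ _ h with h' | h' <;> omega
  · intro h; have := (hzadj _).mp h.symm; omega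
  · intro h; rcases (hxadj _).mp h with h' | h' <;> omega
end

section
/- Let G be a (K_3, P_2 + P_4)-free graph containing an induced 5-cycle on vertices v_1, ..., v_5 in cyclic order, with W_i and V_i defined as the sets of vertices whose cycle-neighbourhood is {v_i} and {v_{i-1}, v_{i+1}} respectively. If x ∈ W_i, y ∈ V_{i+2}, and z ∈ V_{i+3}, then x, y, z do not form an independent set of size 3 (indices mod 5). -/
/-- In a `(K₃, P₂ + P₄)`-free graph with an induced 5-cycle, no vertices
`x ∈ Wᵢ`, `y ∈ V_{i+2}`, `z ∈ V_{i+3}` form an independent set of size 3. -/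
theorem K3P2P4_no_rainbow_3P1 {V : Type*} [Fintype V] (G : SimpleGraph V)
    (hK3 : G.CliqueFree 3) (hP2P4 : P2P4Free G)
    (v : Fin 5 → V) (hinj : Function.Injective v)
    (hcyc : ∀ i : Fin 5, G.Adj (v i) (v (i + 1)))
    (hindC : ∀ i j : Fin 5, G.Adj (v i) (v j) → j = i + 1 ∨ j = i - 1) :
    ∀ i : Fin 5, ∀ x ∈ cycW G v i, ∀ y ∈ cycV G v (i + 2), ∀ z ∈ cycV G v (i + 3),
      G.Adj x y ∨ G.Adj x z ∨ G.Adj y z := by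
  intro i x hx y hy z hz
  by_contra hcon
  push_neg at hcon
  obtain ⟨hxy, hxz, hyz⟩ := hcon
  obtain ⟨hxR, hxA⟩ := hx
  obtain ⟨hyR, hyA⟩ := hy
  obtain ⟨hzR, hzA⟩ := hz
  have axvi : G.Adj x (v i) := (hxA i).mpr rfl
  have ayvi3 : G.Adj y (v (i + 3)) := (hyA (i + 3)).mpr (Or.inr (by omega))
  have azvi2 : G.Adj z (v (i + 2)) := (hzA (i + 2)).mpr (Or.inl (by omega))
  have hxn : ∀ j, j ≠ i → ¬ G.Adj x (v j) := fun j hj h => hj ((hxA j).mp h)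
  have hyn : ∀ j, j ≠ i + 1 → j ≠ i + 3 → ¬ G.Adj y (v j) := by
    intro j h1 h2 h
    rcases (hyA j).mp h with h' | h' <;> omega
  have hzn : ∀ j, j ≠ i + 2 → j ≠ i + 4 → ¬ G.Adj z (v j) := by
    intro j h1 h2 h
    rcases (hzA j).mp h with h' | h' <;> omega
  have hxy' : x ≠ y := fun h => hyn i (by omega) (by omega) (h ▸ axvi)
  have hxz' : x ≠ z := fun h => hzn i (by omega) (by omega) (h ▸ axvi)
  have hyz' : y ≠ z := fun h => hzn (i + 3) (by omega) (by omega) (h ▸ ayvi3)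
  have hxv : ∀ j, x ≠ v j := fun j h => hxR ⟨j, h.symm⟩
  have hyv : ∀ j, y ≠ v j := fun j h => hyR ⟨j, h.symm⟩
  have hzv : ∀ j, z ≠ v j := fun j h => hzR ⟨j, h.symm⟩
  have hvv : ∀ j k : Fin 5, j ≠ k → v j ≠ v k := fun j k h hh => h (hinj hh)
  have hcn : ∀ j k : Fin 5, k ≠ j + 1 → k ≠ j - 1 → ¬ G.Adj (v j) (v k) := by
    intro j k h1 h2 h
    rcases hindC j k h with h' | h' <;> [exact h1 h'; exact h2 h']
  have hde : G.Adj (v (i + 3)) (v (i + 2)) := by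
    have h := (hcyc (i + 2)).symm
    rwa [show i + 2 + 1 = i + 3 from by omega] at h
  apply hP2P4
  refine ⟨x, v i, y, v (i + 3), v (i + 2), z, ?_, axvi, ayvi3,
    hde, azvi2.symm,
    hxy, hxn (i + 3) (by omega), hxn (i + 2) (by omega), hxz,
    fun h => hyn i (by omega) (by omega) h.symm,
    hcn i (i + 3) (by omega) (by omega), hcn i (i + 2) (by omega) (by omega),
    fun h => hzn i (by omega) (by omega) h.symm,
    hyn (i + 2) (by omega) (by omega), hyz,
    fun h => hzn (i + 3) (by omega) (by omega) h.symm⟩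
  simp only [List.nodup_cons, List.mem_cons, List.mem_singleton,
    List.not_mem_nil, List.nodup_nil, or_false, not_or, and_true]
  exact ⟨⟨hxv i, hxy', hxv (i + 3), hxv (i + 2), hxz'⟩,
    ⟨fun h => hyv i h.symm, hvv i (i + 3) (by omega), hvv i (i + 2) (by omega),
      fun h => hzv i h.symm⟩,
    ⟨hyv (i + 3), hyv (i + 2), hyz'⟩,
    ⟨hvv (i + 3) (i + 2) (by omega), fun h => hzv (i + 3) h.symm⟩,
    ⟨fun h => hzv (i + 2) h.symm, not_false⟩⟩
end

section
/- Let G be a (K_3, P_1 + P_5)-free graph containing an induced 5-cycle on vertices v_1, ..., v_5 in cyclic order, with W_i and V_i the sets of vertices whose cycle-neighbourhood is {v_i} and {v_{i-1}, v_{i+1}} respectively. If x ∈ W_i, y ∈ V_{i+2}, and z ∈ V_{i+3}, then x, y, z do not form an independent set of size 3 (indices mod 5). -/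
/-- In a `(K₃, P₁ + P₅)`-free graph with an induced 5-cycle, no vertices
`x ∈ Wᵢ`, `y ∈ V_{i+2}`, `z ∈ V_{i+3}` form an independent set of size 3. -/
theorem K3P1P5_no_rainbow_3P1 {V : Type*} [Fintype V] (G : SimpleGraph V)
    (hK3 : G.CliqueFree 3) (hP1P5 : P1P5Free G)
    (v : Fin 5 → V) (hinj : Function.Injective v)
    (hcyc : ∀ i : Fin 5, G.Adj (v i) (v (i + 1)))
    (hindC : ∀ i j : Fin 5, G.Adj (v i) (v j) → j = i + 1 ∨ j = i - 1) :
    ∀ i : Fin 5, ∀ x ∈ cycW G v i, ∀ y ∈ cycV G v (i + 2), ∀ z ∈ cycV G v (i + 3),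
      G.Adj x y ∨ G.Adj x z ∨ G.Adj y z := by
  intro i x hx y hy z hz
  by_contra hcon
  push_neg at hcon
  obtain ⟨hxy, hxz, hyz⟩ := hcon
  obtain ⟨hxr, hxa⟩ := hx
  obtain ⟨hyr, hya⟩ := hy
  obtain ⟨hzr, hza⟩ := hz
  -- arithmetic normalization
  have e1 : (i + 2 : Fin 5) - 1 = i + 1 := by open Fin.CommRing in ring
  have e2 : (i + 2 : Fin 5) + 1 = i + 3 := by open Fin.CommRing in ring
  have e3 : (i + 3 : Fin 5) - 1 = i + 2 := by open Fin.CommRing in ring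
  have e4 : (i + 3 : Fin 5) + 1 = i + 4 := by open Fin.CommRing in ring
  rw [e1, e2] at hya
  rw [e3, e4] at hza
  have hne : ∀ a b : Fin 5, a ≠ b → i + a ≠ i + b := fun a b hab h => hab (add_left_cancel h)
  have h0 : ∀ a : Fin 5, a ≠ 0 → i + a ≠ i := by
    intro a ha h
    exact ha (add_left_cancel (a := i) (by rw [h, add_zero]))
  -- y's cycle adjacencies
  have hy1 : G.Adj y (v (i + 1)) := (hya (i + 1)).2 (Or.inl rfl)
  have hy2 : ¬ G.Adj y (v (i + 2)) := by
    rw [hya]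
    rintro (h | h)
    · exact hne 2 1 (by decide) h
    · exact hne 2 3 (by decide) h
  have hy4 : ¬ G.Adj y (v (i + 4)) := by
    rw [hya]
    rintro (h | h)
    · exact hne 4 1 (by decide) h
    · exact hne 4 3 (by decide) h
  -- z's cycle adjacencies
  have hz2 : G.Adj z (v (i + 2)) := (hza (i + 2)).2 (Or.inl rfl)
  have hz4 : G.Adj z (v (i + 4)) := (hza (i + 4)).2 (Or.inr rfl)
  have hz1 : ¬ G.Adj z (v (i + 1)) := by
    rw [hza]
    rintro (h | h)
    · exact hne 1 2 (by decide) h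
    · exact hne 1 4 (by decide) h
  -- x's cycle adjacencies
  have hx1 : ¬ G.Adj x (v (i + 1)) := by rw [hxa]; exact h0 1 (by decide)
  have hx2 : ¬ G.Adj x (v (i + 2)) := by rw [hxa]; exact h0 2 (by decide)
  have hx4 : ¬ G.Adj x (v (i + 4)) := by rw [hxa]; exact h0 4 (by decide)
  -- cycle non-adjacencies
  have hc14 : ¬ G.Adj (v (i + 1)) (v (i + 4)) := by
    intro h
    rcases hindC _ _ h with h' | h'
    · exact hne 4 2 (by decide) (by rw [h']; open Fin.CommRing in ring)
    · exact hne 4 0 (by decide) (by rw [h']; open Fin.CommRing in ring)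
  have hc24 : ¬ G.Adj (v (i + 2)) (v (i + 4)) := by
    intro h
    rcases hindC _ _ h with h' | h'
    · exact hne 4 3 (by decide) (by rw [h']; open Fin.CommRing in ring)
    · exact hne 4 1 (by decide) (by rw [h']; open Fin.CommRing in ring)
  -- distinctness facts
  have hxv : ∀ j : Fin 5, x ≠ v j := fun j h => hxr ⟨j, h.symm⟩
  have hyv : ∀ j : Fin 5, y ≠ v j := fun j h => hyr ⟨j, h.symm⟩
  have hzv : ∀ j : Fin 5, z ≠ v j := fun j h => hzr ⟨j, h.symm⟩
  have hvne : ∀ a b : Fin 5, a ≠ b → v (i + a) ≠ v (i + b) :=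
    fun a b hab h => hne a b hab (hinj h)
  have hxy' : x ≠ y := fun h => hx1 (h ▸ hy1)
  have hxz' : x ≠ z := fun h => hx2 (h ▸ hz2)
  have hyz' : y ≠ z := fun h => hy2 (h ▸ hz2)
  -- build the forbidden P1 + P5 : a = x, path y - v(i+1) - v(i+2) - z - v(i+4)
  apply hP1P5
  have hc12 : G.Adj (v (i + 1)) (v (i + 2)) := by
    have := hcyc (i + 1)
    rwa [show i + 1 + 1 = i + 2 from by open Fin.CommRing in ring] at this
  refine ⟨x, y, v (i + 1), v (i + 2), z, v (i + 4), ?_, hy1, hc12, hz2.symm, hz4,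
    hxy, hx1, hx2, hxz, hx4, hy2, hyz, hy4, fun h => hz1 h.symm, hc14, hc24⟩
  simp only [List.nodup_cons, List.mem_cons, List.mem_singleton, List.not_mem_nil,
    List.nodup_nil, or_false, and_true]
  refine ⟨?_, ?_, ?_, ?_, ?_⟩
  · push_neg
    exact ⟨hxy', hxv _, hxv _, hxz', hxv _⟩
  · push_neg
    exact ⟨hyv _, hyv _, hyz', hyv _⟩
  · push_neg
    exact ⟨hvne 1 2 (by decide), fun h => hzv _ h.symm, hvne 1 4 (by decide)⟩
  · push_neg
    exact ⟨fun h => (hzv _) h.symm, hvne 2 4 (by decide)⟩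
  · exact ⟨fun h => (hzv _) h, not_false⟩
end

section
/- Let G be a connected (K_3, P_1 + P_5)-free graph containing an induced 5-cycle, and let U be the set of vertices with no neighbour on the cycle. Then any two vertices of U have the same neighbourhood in V(G) \ U, and consequently U is an independent set. -/
/-- Key lemma: in a `(K₃, P₁ + P₅)`-free graph with an induced 5-cycle, if a
vertex `w` with a neighbour on the cycle has a neighbour in `U`, then `w` is
adjacent to every vertex of `U`. -/
lemma cycU_key {V : Type*} (G : SimpleGraph V)
    (hK3 : G.CliqueFree 3) (hP1P5 : P1P5Free G)
    (v : Fin 5 → V) (hinj : Function.Injective v)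
    (hcyc : ∀ i : Fin 5, G.Adj (v i) (v (i + 1)))
    (hindC : ∀ i j : Fin 5, G.Adj (v i) (v j) → j = i + 1 ∨ j = i - 1)
    {u w : V} (hu : u ∈ cycU G v) (huw : G.Adj u w)
    {j : Fin 5} (hwj : G.Adj w (v j))
    {u'' : V} (hu'' : u'' ∈ cycU G v) : G.Adj u'' w := by
  classical
  obtain ⟨hu1, hu2⟩ := hu
  obtain ⟨hu''1, hu''2⟩ := hu''
  have tri : ∀ {a b c : V}, G.Adj a b → G.Adj a c → G.Adj b c → False := by
    intro a b c h1 h2 h3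
    exact hK3 _ (SimpleGraph.is3Clique_triple_iff.mpr ⟨h1, h2, h3⟩)
  have nsym : ∀ {x y : V}, ¬ G.Adj x y → ¬ G.Adj y x := fun h ha => h ha.symm
  -- arithmetic facts in Fin 5
  have e41 : ∀ t : Fin 5, t + 4 + 1 = t := by decide
  have e21 : ∀ t : Fin 5, t + 2 + 1 = t + 3 := by decide
  have e34 : ∀ t : Fin 5, t + 3 + 4 = t + 2 := by decide
  have e33 : ∀ t : Fin 5, t + 3 + 3 = t + 1 := by decide
  have e31 : ∀ t : Fin 5, t + 3 + 1 = t + 4 := by decide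
  have e11 : ∀ t : Fin 5, t + 1 + 1 = t + 2 := by decide
  have e43 : ∀ t : Fin 5, t + 4 + 3 = t + 2 := by decide
  have e42 : ∀ t : Fin 5, t + 4 + 2 = t + 1 := by decide
  have e23 : ∀ t : Fin 5, t + 2 + 3 = t := by decide
  have e22 : ∀ t : Fin 5, t + 2 + 2 = t + 4 := by decide
  have p42 : ∀ t : Fin 5, t + 4 ≠ t + 2 := by decide
  have p41 : ∀ t : Fin 5, t + 4 ≠ t + 1 := by decide
  have p21 : ∀ t : Fin 5, t + 2 ≠ t + 1 := by decide
  have p20 : ∀ t : Fin 5, t + 2 ≠ t := by decide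
  have p24 : ∀ t : Fin 5, t + 2 ≠ t + 4 := by decide
  have p04 : ∀ t : Fin 5, t ≠ t + 4 := by decide
  have p03 : ∀ t : Fin 5, t ≠ t + 3 := by decide
  have p43 : ∀ t : Fin 5, t + 4 ≠ t + 3 := by decide
  have hvne : ∀ {i k : Fin 5}, i ≠ k → v i ≠ v k := fun h he => h (hinj he)
  have hA4 : ∀ i : Fin 5, G.Adj (v i) (v (i + 4)) := by
    intro i; have h := hcyc (i + 4); rw [e41 i] at h; exact h.symm
  have hNA : ∀ i k : Fin 5, ¬ (k = i + 1 ∨ k = i - 1) → ¬ G.Adj (v i) (v k) :=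
    fun i k h ha => h (hindC i k ha)
  have q2 : ∀ t : Fin 5, ¬ (t + 2 = t + 1 ∨ t + 2 = t - 1) := by decide
  have q3 : ∀ t : Fin 5, ¬ (t + 3 = t + 1 ∨ t + 3 = t - 1) := by decide
  have hN2 : ∀ i : Fin 5, ¬ G.Adj (v i) (v (i + 2)) := fun i => hNA i (i + 2) (q2 i)
  have hN3 : ∀ i : Fin 5, ¬ G.Adj (v i) (v (i + 3)) := fun i => hNA i (i + 3) (q3 i)
  have hunv : ∀ k : Fin 5, u ≠ v k := fun k h => hu1 ⟨k, h.symm⟩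
  have hu''nv : ∀ k : Fin 5, u'' ≠ v k := fun k h => hu''1 ⟨k, h.symm⟩
  have hwnv : ∀ k : Fin 5, w ≠ v k := fun k h => hu2 k (by rw [← h]; exact huw)
  have hvnu : ∀ k : Fin 5, v k ≠ u := fun k h => hunv k h.symm
  have hvnu'' : ∀ k : Fin 5, v k ≠ u'' := fun k h => hu''nv k h.symm
  have hvnw : ∀ k : Fin 5, v k ≠ w := fun k h => hwnv k h.symm
  -- find a direction `j'` with `w ~ v j'` but `w ≁ v (j'+4)` and `w ≁ v (j'+3)`
  obtain ⟨j', hj1, hj2, hj3⟩ :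
      ∃ j' : Fin 5, G.Adj w (v j') ∧ ¬ G.Adj w (v (j' + 4)) ∧ ¬ G.Adj w (v (j' + 3)) := by
    by_cases h2 : G.Adj w (v (j + 3))
    · refine ⟨j + 3, h2, ?_, ?_⟩
      · rw [e34 j]
        intro h
        have hadj : G.Adj (v (j + 3)) (v (j + 2)) := by
          have h3 := hcyc (j + 2); rw [e21 j] at h3; exact h3.symm
        exact tri h2 h hadj
      · rw [e33 j]; intro h; exact tri hwj h (hcyc j)
    · exact ⟨j, hwj, fun h => tri hwj h (hA4 j), h2⟩
  by_contra hcon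
  have hu''ne_u : u'' ≠ u := fun h => hcon (by rw [h]; exact huw)
  have hu''ne_w : u'' ≠ w := fun h => hu''2 j' (by rw [h]; exact hj1)
  have hune_w : u ≠ w := G.ne_of_adj huw
  have hDE : G.Adj (v j') (v (j' + 4)) := hA4 j'
  have hEF : G.Adj (v (j' + 4)) (v (j' + 3)) := by
    have h := hcyc (j' + 3); rw [e31 j'] at h; exact h.symm
  by_cases hadjU : G.Adj u'' u
  · by_cases hw2 : G.Adj w (v (j' + 2))
    · -- a = v(j'+4), b = u'', c = u, d = w, e = v(j'+2), f = v(j'+1)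
      have hef : G.Adj (v (j' + 2)) (v (j' + 1)) := by
        have h := hcyc (j' + 1); rw [e11 j'] at h; exact h.symm
      have hae : ¬ G.Adj (v (j' + 4)) (v (j' + 2)) := by
        have h := hN3 (j' + 4); rw [e43 j'] at h; exact h
      have haf : ¬ G.Adj (v (j' + 4)) (v (j' + 1)) := by
        have h := hN2 (j' + 4); rw [e42 j'] at h; exact h
      have hdf : ¬ G.Adj w (v (j' + 1)) := fun h => tri hj1 h (hcyc j')
      refine hP1P5 ⟨v (j' + 4), u'', u, w, v (j' + 2), v (j' + 1), ?_,
        hadjU, huw, hw2, hef,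
        nsym (hu''2 (j' + 4)), nsym (hu2 (j' + 4)), nsym hj2, hae, haf,
        hcon, hu''2 (j' + 2), hu''2 (j' + 1), hu2 (j' + 2), hu2 (j' + 1), hdf⟩
      simp only [List.nodup_cons, List.mem_cons, List.mem_singleton, List.not_mem_nil,
        or_false, List.nodup_nil, and_true, not_or]
      exact ⟨⟨hvnu'' _, hvnu _, hvnw _, hvne (p42 j'), hvne (p41 j')⟩,
        ⟨hu''ne_u, hu''ne_w, hu''nv _, hu''nv _⟩,
        ⟨hune_w, hunv _, hunv _⟩, ⟨hwnv _, hwnv _⟩, ⟨hvne (p21 j'), not_false⟩⟩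
    · -- a = v(j'+2), b = u'', c = u, d = w, e = v j', f = v(j'+4)
      have hae : ¬ G.Adj (v (j' + 2)) (v j') := by
        have h := hN3 (j' + 2); rw [e23 j'] at h; exact h
      have haf : ¬ G.Adj (v (j' + 2)) (v (j' + 4)) := by
        have h := hN2 (j' + 2); rw [e22 j'] at h; exact h
      refine hP1P5 ⟨v (j' + 2), u'', u, w, v j', v (j' + 4), ?_,
        hadjU, huw, hj1, hDE,
        nsym (hu''2 (j' + 2)), nsym (hu2 (j' + 2)), nsym hw2, hae, haf,
        hcon, hu''2 j', hu''2 (j' + 4), hu2 j', hu2 (j' + 4), hj2⟩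
      simp only [List.nodup_cons, List.mem_cons, List.mem_singleton, List.not_mem_nil,
        or_false, List.nodup_nil, and_true, not_or]
      exact ⟨⟨hvnu'' _, hvnu _, hvnw _, hvne (p20 j'), hvne (p24 j')⟩,
        ⟨hu''ne_u, hu''ne_w, hu''nv _, hu''nv _⟩,
        ⟨hune_w, hunv _, hunv _⟩, ⟨hwnv _, hwnv _⟩, ⟨hvne (p04 j'), not_false⟩⟩
  · -- a = u'', b = u, c = w, d = v j', e = v(j'+4), f = v(j'+3)
    refine hP1P5 ⟨u'', u, w, v j', v (j' + 4), v (j' + 3), ?_,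
      huw, hj1, hDE, hEF,
      hadjU, hcon, hu''2 j', hu''2 (j' + 4), hu''2 (j' + 3),
      hu2 j', hu2 (j' + 4), hu2 (j' + 3), hj2, hj3, hN3 j'⟩
    simp only [List.nodup_cons, List.mem_cons, List.mem_singleton, List.not_mem_nil,
      or_false, List.nodup_nil, and_true, not_or]
    exact ⟨⟨hu''ne_u, hu''ne_w, hu''nv _, hu''nv _, hu''nv _⟩,
      ⟨hune_w, hunv _, hunv _, hunv _⟩, ⟨hwnv _, hwnv _, hwnv _⟩,
      ⟨hvne (p04 j'), hvne (p03 j')⟩, ⟨hvne (p43 j'), not_false⟩⟩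

/-- In a connected `(K₃, P₁ + P₅)`-free graph with an induced 5-cycle, any two
vertices of `U` have the same neighbourhood outside `U`, and `U` is an
independent set. -/
theorem K3P1P5_U_twins {V : Type*} [Fintype V] (G : SimpleGraph V)
    (hconn : G.Connected)
    (hK3 : G.CliqueFree 3) (hP1P5 : P1P5Free G)
    (v : Fin 5 → V) (hinj : Function.Injective v)
    (hcyc : ∀ i : Fin 5, G.Adj (v i) (v (i + 1)))
    (hindC : ∀ i j : Fin 5, G.Adj (v i) (v j) → j = i + 1 ∨ j = i - 1) :
    (∀ u ∈ cycU G v, ∀ u' ∈ cycU G v, ∀ w ∉ cycU G v,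
        (G.Adj u w ↔ G.Adj u' w)) ∧
    (∀ u ∈ cycU G v, ∀ u' ∈ cycU G v, ¬ G.Adj u u') := by
  classical
  have tri : ∀ {a b c : V}, G.Adj a b → G.Adj a c → G.Adj b c → False := by
    intro a b c h1 h2 h3
    exact hK3 _ (SimpleGraph.is3Clique_triple_iff.mpr ⟨h1, h2, h3⟩)
  -- any vertex outside `U` with a neighbour in `U` has a cycle neighbour
  have getj : ∀ u ∈ cycU G v, ∀ w ∉ cycU G v, G.Adj u w → ∃ j : Fin 5, G.Adj w (v j) := by
    intro u hu w hw huw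
    by_contra h
    push_neg at h
    refine hw ⟨?_, h⟩
    rintro ⟨k, rfl⟩
    exact hu.2 k huw
  constructor
  · intro u hu u' hu' w hw
    constructor
    · intro huw
      obtain ⟨j, hj⟩ := getj u hu w hw huw
      exact cycU_key G hK3 hP1P5 v hinj hcyc hindC hu huw hj hu'
    · intro hu'w
      obtain ⟨j, hj⟩ := getj u' hu' w hw hu'w
      exact cycU_key G hK3 hP1P5 v hinj hcyc hindC hu' hu'w hj hu
  · intro u hu u' hu' huu'
    -- find a boundary dart on a walk from `u` to the cycle
    have hv0 : v 0 ∉ cycU G v := fun h => h.1 ⟨0, rfl⟩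
    obtain ⟨p⟩ := hconn.preconnected u (v 0)
    obtain ⟨d, _, hd1, hd2⟩ := p.exists_boundary_dart (cycU G v) hu hv0
    have hyz : G.Adj d.fst d.snd := d.adj
    obtain ⟨j, hj⟩ := getj d.fst hd1 d.snd hd2 hyz
    have h1 : G.Adj u d.snd := cycU_key G hK3 hP1P5 v hinj hcyc hindC hd1 hyz hj hu
    have h2 : G.Adj u' d.snd := cycU_key G hK3 hP1P5 v hinj hcyc hindC hd1 hyz hj hu'
    exact tri huu' h1 h2
end

section
/- Let G be a triangle-free graph containing an induced 5-cycle on vertices v_1, ..., v_5 in cyclic order, with V_i the set of vertices adjacent on the cycle to exactly v_{i-1} and v_{i+1}, and U the set of vertices with no neighbour on the cycle. If x ∈ V_i is adjacent to y ∈ U, and additionally G is (P_2 + P_4)-free, then every vertex z ∈ V_{i-1} ∪ V_{i+1} is adjacent to exactly one of x and y (indices mod 5). -/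
/-- In a `(K₃, P₂ + P₄)`-free graph with an induced 5-cycle, if `x ∈ Vᵢ` is
adjacent to `y ∈ U`, then every vertex of `V_{i-1} ∪ V_{i+1}` is adjacent to
exactly one of `x` and `y`. -/
theorem K3P2P4_ViU_distinguish {V : Type*} [Fintype V] (G : SimpleGraph V)
    (hK3 : G.CliqueFree 3) (hP2P4 : P2P4Free G)
    (v : Fin 5 → V) (hinj : Function.Injective v)
    (hcyc : ∀ i : Fin 5, G.Adj (v i) (v (i + 1)))
    (hindC : ∀ i j : Fin 5, G.Adj (v i) (v j) → j = i + 1 ∨ j = i - 1) :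
    ∀ i : Fin 5, ∀ x ∈ cycV G v i, ∀ y ∈ cycU G v, G.Adj x y →
      ∀ z ∈ cycV G v (i - 1) ∪ cycV G v (i + 1),
        (G.Adj z x ∧ ¬ G.Adj z y) ∨ (¬ G.Adj z x ∧ G.Adj z y) := by

  classical
  intro i x hx y hy hxy z hz
  obtain ⟨hx1, hx2⟩ := hx
  obtain ⟨hy1, hy2⟩ := hy
  by_cases hzx : G.Adj z x
  · by_cases hzy : G.Adj z y
    · exact absurd (SimpleGraph.is3Clique_triple_iff.mpr ⟨hzx, hzy, hxy⟩) (hK3 _)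
    · exact Or.inl ⟨hzx, hzy⟩
  · by_cases hzy : G.Adj z y
    · exact Or.inr ⟨hzx, hzy⟩
    · exfalso
      apply hP2P4
      have hxz : x ≠ z := fun h => hzy (h ▸ hxy)
      have hyz : y ≠ z := fun h => hzx (h ▸ hxy).symm
      have hxv : ∀ j, x ≠ v j := fun j h => hx1 ⟨j, h.symm⟩
      have hyv : ∀ j, y ≠ v j := fun j h => hy1 ⟨j, h.symm⟩
      rcases hz with hz | hz
      · -- z ∈ cycV G v (i - 1)
        obtain ⟨hz1, hz2⟩ := hz
        have hzv : ∀ j, z ≠ v j := fun j h => hz1 ⟨j, h.symm⟩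
        refine ⟨x, y, v i, z, v (i+2+1), v (i+2), ?_, hxy,
          ((hz2 i).mpr ((by decide : ∀ i : Fin 5, i = i-1-1 ∨ i = i-1+1) i)).symm,
          (hz2 (i+2+1)).mpr ((by decide : ∀ i : Fin 5, i+2+1 = i-1-1 ∨ i+2+1 = i-1+1) i),
          (hcyc (i+2)).symm,
          fun h => (by decide : ∀ i : Fin 5, ¬(i = i-1 ∨ i = i+1)) i ((hx2 i).mp h),
          fun h => hzx h.symm,
          fun h => (by decide : ∀ i : Fin 5, ¬(i+2+1 = i-1 ∨ i+2+1 = i+1)) i ((hx2 _).mp h),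
          fun h => (by decide : ∀ i : Fin 5, ¬(i+2 = i-1 ∨ i+2 = i+1)) i ((hx2 _).mp h),
          hy2 i, fun h => hzy h.symm, hy2 _, hy2 _,
          fun h => (by decide : ∀ i : Fin 5, ¬(i+2+1 = i+1 ∨ i+2+1 = i-1)) i (hindC i _ h),
          fun h => (by decide : ∀ i : Fin 5, ¬(i+2 = i+1 ∨ i+2 = i-1)) i (hindC i _ h),
          fun h => (by decide : ∀ i : Fin 5, ¬(i+2 = i-1-1 ∨ i+2 = i-1+1)) i ((hz2 _).mp h)⟩
        simp only [List.nodup_cons, List.mem_cons, List.not_mem_nil, or_false, not_or,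
          List.nodup_nil, and_true]
        exact ⟨⟨hxy.ne, hxv i, hxz, hxv _, hxv _⟩, ⟨hyv i, hyz, hyv _, hyv _⟩,
          ⟨fun h => hz1 ⟨i, h⟩,
           fun h => (by decide : ∀ i : Fin 5, ¬(i = i+2+1)) i (hinj h),
           fun h => (by decide : ∀ i : Fin 5, ¬(i = i+2)) i (hinj h)⟩,
          ⟨hzv _, hzv _⟩,
          ⟨fun h => (by decide : ∀ i : Fin 5, ¬(i+2+1 = i+2)) i (hinj h), not_false⟩⟩
      · -- z ∈ cycV G v (i + 1)
        obtain ⟨hz1, hz2⟩ := hz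
        have hzv : ∀ j, z ≠ v j := fun j h => hz1 ⟨j, h.symm⟩
        refine ⟨x, y, v i, z, v (i+2), v (i+2+1), ?_, hxy,
          ((hz2 i).mpr ((by decide : ∀ i : Fin 5, i = i+1-1 ∨ i = i+1+1) i)).symm,
          (hz2 (i+2)).mpr ((by decide : ∀ i : Fin 5, i+2 = i+1-1 ∨ i+2 = i+1+1) i),
          hcyc (i+2),
          fun h => (by decide : ∀ i : Fin 5, ¬(i = i-1 ∨ i = i+1)) i ((hx2 i).mp h),
          fun h => hzx h.symm,
          fun h => (by decide : ∀ i : Fin 5, ¬(i+2 = i-1 ∨ i+2 = i+1)) i ((hx2 _).mp h),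
          fun h => (by decide : ∀ i : Fin 5, ¬(i+2+1 = i-1 ∨ i+2+1 = i+1)) i ((hx2 _).mp h),
          hy2 i, fun h => hzy h.symm, hy2 _, hy2 _,
          fun h => (by decide : ∀ i : Fin 5, ¬(i+2 = i+1 ∨ i+2 = i-1)) i (hindC i _ h),
          fun h => (by decide : ∀ i : Fin 5, ¬(i+2+1 = i+1 ∨ i+2+1 = i-1)) i (hindC i _ h),
          fun h => (by decide : ∀ i : Fin 5, ¬(i+2+1 = i+1-1 ∨ i+2+1 = i+1+1)) i ((hz2 _).mp h)⟩
        simp only [List.nodup_cons, List.mem_cons, List.not_mem_nil, or_false, not_or,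
          List.nodup_nil, and_true]
        exact ⟨⟨hxy.ne, hxv i, hxz, hxv _, hxv _⟩, ⟨hyv i, hyz, hyv _, hyv _⟩,
          ⟨fun h => hz1 ⟨i, h⟩,
           fun h => (by decide : ∀ i : Fin 5, ¬(i = i+2)) i (hinj h),
           fun h => (by decide : ∀ i : Fin 5, ¬(i = i+2+1)) i (hinj h)⟩,
          ⟨hzv _, hzv _⟩,
          ⟨fun h => (by decide : ∀ i : Fin 5, ¬(i+2 = i+2+1)) i (hinj h), not_false⟩⟩
end
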